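/- For two POMs M₁ and M₂ on measurable spaces Ω₁ and Ω₂ acting on Hilbert spaces H₁ and H₂, the assignment B₁ × B₂ ↦ M₁(B₁) ⊗ M₂(B₂) extends to a POM on Ω₁ × Ω₂ acting on H₁ ⊗ H₂, and for density operators ρ₁, ρ₂, the induced probability measure tr((ρ₁ ⊗ ρ₂)(M₁ ⊗ M₂)(·)) is the product of the measures tr(ρ₁ M₁(·)) and tr(ρ₂ M₂(·)). -/

import Mathlib

open MeasureTheory ComplexOrder Kronecker

/-- A positive operator valued measure (POM) on a measurable space `Ω`,
with values in operators on a finite-dimensional Hilbert space, represented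
as complex matrices indexed by `n`. -/
structure POM (Ω : Type*) [MeasurableSpace Ω] (n : Type*) [Fintype n] [DecidableEq n] where
  val : Set Ω → Matrix n n ℂ
  pos : ∀ B : Set Ω, MeasurableSet B → (val B).PosSemidef
  empty : val ∅ = 0
  univ : val Set.univ = 1
  countably_additive : ∀ f : ℕ → Set Ω, (∀ i, MeasurableSet (f i)) →
    Pairwise (Function.onFun Disjoint f) →
    HasSum (fun i => val (f i)) (val (⋃ i, f i))

namespace POMaux
open scoped Matrix

lemma integral_ofReal' {α : Type*} [MeasurableSpace α] (μ : Measure α) (f : α → ℝ) :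
    ∫ x, ((f x : ℝ) : ℂ) ∂μ = ((∫ x, f x ∂μ : ℝ) : ℂ) := integral_ofReal

variable {Ω : Type*} [MeasurableSpace Ω] {n : Type*} [Fintype n] [DecidableEq n]

noncomputable def qf (A : Matrix n n ℂ) (x : n → ℂ) : ℂ :=
  dotProduct (star x) (A.mulVec x)

lemma qf_expand (A : Matrix n n ℂ) (x : n → ℂ) :
    qf A x = ∑ a, ∑ b, (starRingEnd ℂ) (x a) * A a b * x b := by
  simp [qf, dotProduct, Matrix.mulVec, Finset.mul_sum, mul_assoc]

lemma qf_nonneg {A : Matrix n n ℂ} (hA : A.PosSemidef) (x : n → ℂ) : 0 ≤ qf A x := hA.dotProduct_mulVec_nonneg x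

lemma qf_re_nonneg {A : Matrix n n ℂ} (hA : A.PosSemidef) (x : n → ℂ) : 0 ≤ (qf A x).re := by
  have := qf_nonneg hA x; rw [Complex.le_def] at this; simpa using this.1

lemma qf_im_zero {A : Matrix n n ℂ} (hA : A.PosSemidef) (x : n → ℂ) : (qf A x).im = 0 := by
  have := qf_nonneg hA x; rw [Complex.le_def] at this; simpa using this.2.symm

/-- qf as a continuous linear map in the matrix argument. -/
noncomputable def qfCLM (x : n → ℂ) : Matrix n n ℂ →L[ℂ] ℂ :=
  LinearMap.toContinuousLinearMap
    { toFun := fun A => qf A x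
      map_add' := by
        intro A B
        simp [qf, Matrix.add_mulVec, dotProduct_add]
      map_smul' := by
        intro c A
        simp [qf, Matrix.smul_mulVec, dotProduct_smul] }

lemma qfCLM_apply (x : n → ℂ) (A : Matrix n n ℂ) : qfCLM x A = qf A x := rfl

/-- The positive measure `B ↦ x† M(B) x` attached to a POM and a vector. -/
noncomputable def pomMeasure (M : POM Ω n) (x : n → ℂ) : Measure Ω :=
  Measure.ofMeasurable (fun s _ => ENNReal.ofReal (qf (M.val s) x).re)
    (by simp [M.empty, qf])
    (by
      intro f hf hd
      have hs := M.countably_additive f hf hd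
      have hq : HasSum (fun i => qf (M.val (f i)) x) (qf (M.val (⋃ i, f i)) x) := by
        simpa [qfCLM_apply] using (qfCLM x).hasSum hs
      have hr : HasSum (fun i => (qf (M.val (f i)) x).re) ((qf (M.val (⋃ i, f i)) x).re) := by
        simpa using Complex.reCLM.hasSum hq
      rw [← hr.tsum_eq, ENNReal.ofReal_tsum_of_nonneg
        (fun i => qf_re_nonneg (M.pos _ (hf i)) x) hr.summable])

lemma pomMeasure_apply (M : POM Ω n) (x : n → ℂ) {s : Set Ω} (hs : MeasurableSet s) :
    pomMeasure M x s = ENNReal.ofReal (qf (M.val s) x).re :=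
  Measure.ofMeasurable_apply s hs

instance pomMeasure_finite (M : POM Ω n) (x : n → ℂ) : IsFiniteMeasure (pomMeasure M x) := by
  constructor
  rw [pomMeasure_apply M x MeasurableSet.univ]
  exact ENNReal.ofReal_lt_top

lemma pomMeasure_toReal (M : POM Ω n) (x : n → ℂ) {s : Set Ω} (hs : MeasurableSet s) :
    ((pomMeasure M x s).toReal : ℂ) = qf (M.val s) x := by
  rw [pomMeasure_apply M x hs, ENNReal.toReal_ofReal (qf_re_nonneg (M.pos s hs) x)]
  exact (Complex.ext (by simp) (by simp [qf_im_zero (M.pos s hs) x])).symm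


noncomputable def pvec (k : ℕ) (a b : n) : n → ℂ :=
  (Pi.single a 1 : n → ℂ) + (Complex.I ^ k) • (Pi.single b 1 : n → ℂ)

lemma qf_single_expand (A : Matrix n n ℂ) (a b : n) (c : ℂ) :
    qf A ((Pi.single a 1 : n → ℂ) + c • (Pi.single b 1 : n → ℂ)) =
      A a a + (starRingEnd ℂ) c * A b a + c * A a b + (starRingEnd ℂ) c * c * A b b := by
  simp only [qf, star_add, star_smul, dotProduct_add, add_dotProduct,
    Matrix.mulVec_add, Matrix.mulVec_smul, smul_dotProduct, dotProduct_smul,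
    smul_eq_mul, Pi.single_star, star_one, RCLike.star_def]
  rw [Matrix.mulVec_single, Matrix.mulVec_single]
  simp only [← Pi.single_star, star_one, single_dotProduct, one_mul, MulOpposite.op_one, one_smul,
    Matrix.col_apply]
  ring

lemma polarization (A : Matrix n n ℂ) (a b : n) :
    ∑ k ∈ Finset.range 4, (-Complex.I) ^ k * qf A (pvec k a b) = 4 * A a b := by
  have h2 : Complex.I ^ 2 = -1 := Complex.I_sq
  have h3 : Complex.I ^ 3 = -Complex.I := by rw [pow_succ, h2]; ring
  simp only [Finset.sum_range_succ, Finset.sum_range_zero, pvec, qf_single_expand,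
    pow_zero, pow_one, h2, h3, map_one, map_neg, Complex.conj_I, neg_mul, one_mul,
    neg_neg, mul_neg, mul_one, map_one]
  have h4 : Complex.I ^ 4 = 1 := by rw [pow_succ, h3]; simp [Complex.I_mul_I]
  have h5 : Complex.I ^ 5 = Complex.I := by rw [pow_succ, h4]; ring
  ring_nf
  rw [h2, h3, h4, h5]
  ring

lemma qf_single (A : Matrix n n ℂ) (a : n) : qf A (Pi.single a 1) = A a a := by
  have := qf_single_expand A a a 0
  simpa using this

lemma qf_smul (A : Matrix n n ℂ) (c : ℂ) (x : n → ℂ) :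
    qf A (c • x) = (starRingEnd ℂ) c * c * qf A x := by
  simp [qf, star_smul, smul_dotProduct, dotProduct_smul, Matrix.mulVec_smul,
    smul_eq_mul, RCLike.star_def]
  ring

lemma pomMeasure_congr (M : POM Ω n) {x y : n → ℂ} (h : ∀ A : Matrix n n ℂ, qf A x = qf A y) :
    pomMeasure M x = pomMeasure M y := by
  ext s hs
  rw [pomMeasure_apply M x hs, pomMeasure_apply M y hs, h]

lemma pomMeasure_unit_smul (M : POM Ω n) (c : ℂ) (hc : (starRingEnd ℂ) c * c = 1) (x : n → ℂ) :
    pomMeasure M (c • x) = pomMeasure M x := by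
  refine pomMeasure_congr M fun A => ?_
  rw [qf_smul, hc, one_mul]

/-- The "trace" measure of a POM. -/
noncomputable def trMeas (M : POM Ω n) : Measure Ω :=
  ∑ a : n, pomMeasure M (Pi.single a 1)

instance trMeas_finite (M : POM Ω n) : IsFiniteMeasure (trMeas M) := by
  unfold trMeas; infer_instance

open scoped MatrixOrder in
lemma psd_exists_ct_mul_self {A : Matrix n n ℂ} (hA : A.PosSemidef) : ∃ B : Matrix n n ℂ, A = Bᴴ * B := by
  obtain ⟨B, rfl⟩ := CStarAlgebra.nonneg_iff_eq_star_mul_self.mp hA.nonneg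
  exact ⟨B, rfl⟩

lemma psd_diag_zero {A : Matrix n n ℂ} (hA : A.PosSemidef) (h : ∀ a, A a a = 0) : A = 0 := by
  obtain ⟨B, rfl⟩ := psd_exists_ct_mul_self hA
  have hB : B = 0 := by
    ext c a
    have ha := h a
    rw [Matrix.mul_apply] at ha
    have : ∑ i, Complex.normSq (B i a) = 0 := by
      have := congrArg Complex.re ha
      simpa [Matrix.conjTranspose_apply, Complex.normSq_apply] using this
    have := (Finset.sum_eq_zero_iff_of_nonneg (fun i _ => Complex.normSq_nonneg _)).mp this
      c (Finset.mem_univ c)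
    simpa using this
  rw [hB]; simp

lemma diag_eq_zero_of_trMeas_zero (M : POM Ω n) {s : Set Ω} (hs : MeasurableSet s)
    (h : trMeas M s = 0) : M.val s = 0 := by
  refine psd_diag_zero (M.pos s hs) fun a => ?_
  have hsum : ∑ b : n, pomMeasure M (Pi.single b 1) s = 0 := by
    rw [← h, trMeas]
    simp [Measure.finset_sum_apply]
  have hzero : pomMeasure M (Pi.single a 1) s = 0 :=
    (Finset.sum_eq_zero_iff.mp hsum) a (Finset.mem_univ a)
  rw [pomMeasure_apply M _ hs, ENNReal.ofReal_eq_zero] at hzero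
  have hre : (qf (M.val s) (Pi.single a 1)).re = 0 :=
    le_antisymm hzero (qf_re_nonneg (M.pos s hs) _)
  have him := qf_im_zero (M.pos s hs) (Pi.single a (1:ℂ))
  have : qf (M.val s) (Pi.single a 1) = 0 := Complex.ext (by simpa using hre) (by simpa using him)
  rwa [qf_single] at this

lemma pomMeasure_ac (M : POM Ω n) (x : n → ℂ) : pomMeasure M x ≪ trMeas M := by
  refine Measure.AbsolutelyContinuous.mk fun s hs h0 => ?_
  rw [pomMeasure_apply M x hs, diag_eq_zero_of_trMeas_zero M hs h0]
  simp [qf]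

/-- The matrix-valued Radon-Nikodym density of a POM with respect to its trace measure. -/
noncomputable def densA (M : POM Ω n) (ω : Ω) : Matrix n n ℂ :=
  Matrix.of fun a b => (4:ℂ)⁻¹ * ∑ k ∈ Finset.range 4, (-Complex.I) ^ k *
    ((((pomMeasure M (pvec k a b)).rnDeriv (trMeas M) ω).toReal : ℝ) : ℂ)

lemma densA_integrable (M : POM Ω n) (a b : n) :
    Integrable (fun ω => densA M ω a b) (trMeas M) := by
  unfold densA
  simp only [Matrix.of_apply]
  refine Integrable.const_mul ?_ _
  refine integrable_finset_sum _ fun k _ => ?_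
  exact (Measure.integrable_toReal_rnDeriv.ofReal.const_mul _)

lemma densA_setIntegral (M : POM Ω n) {s : Set Ω} (hs : MeasurableSet s) (a b : n) :
    ∫ ω in s, densA M ω a b ∂(trMeas M) = M.val s a b := by
  unfold densA
  simp only [Matrix.of_apply]
  rw [MeasureTheory.integral_const_mul]
  have hsplit := integral_finset_sum (μ := (trMeas M).restrict s) (Finset.range 4)
    (f := fun k ω => (-Complex.I) ^ k *
      ((((pomMeasure M (pvec k a b)).rnDeriv (trMeas M) ω).toReal : ℝ) : ℂ))
    (fun k _ => ((Measure.integrable_toReal_rnDeriv.ofReal.const_mul _).restrict))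
  rw [hsplit]
  have hterm : ∀ k, ∫ ω in s, (-Complex.I) ^ k *
      ((((pomMeasure M (pvec k a b)).rnDeriv (trMeas M) ω).toReal : ℝ) : ℂ) ∂(trMeas M)
      = (-Complex.I) ^ k * qf (M.val s) (pvec k a b) := by
    intro k
    rw [MeasureTheory.integral_const_mul, integral_ofReal',
      Measure.setIntegral_toReal_rnDeriv (pomMeasure_ac M _) s, measureReal_def, pomMeasure_toReal M _ hs]
  simp only [hterm]
  rw [polarization]
  ring

lemma pvec_swap0 (a b : n) : pvec 0 b a = pvec (0:ℕ) a b := by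
  simp only [pvec, pow_zero, one_smul]
  exact add_comm _ _

lemma pvec_swap1 (a b : n) : pvec 1 b a = Complex.I • pvec 3 a b := by
  simp only [pvec, smul_add, smul_smul, pow_one]
  rw [show Complex.I * Complex.I ^ 3 = 1 by
    rw [show Complex.I ^ 3 = -Complex.I by rw [pow_succ, Complex.I_sq]; ring]
    simp [Complex.I_mul_I], one_smul]
  exact add_comm _ _

lemma pvec_swap2 (a b : n) : pvec 2 b a = (-1 : ℂ) • pvec 2 a b := by
  simp only [pvec, smul_add, smul_smul, Complex.I_sq]
  rw [show (-1 : ℂ) * (-1) = 1 by ring, one_smul, neg_one_smul]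
  exact add_comm _ _

lemma pvec_swap3 (a b : n) : pvec 3 b a = (-Complex.I) • pvec 1 a b := by
  simp only [pvec, smul_add, smul_smul, pow_one]
  rw [show -Complex.I * Complex.I = 1 by simp [Complex.I_mul_I],
    show Complex.I ^ 3 = -Complex.I by rw [pow_succ, Complex.I_sq]; ring, one_smul]
  exact add_comm _ _


lemma pomMeasure_pvec_swap (M : POM Ω n) (a b : n) (k : ℕ) (hk : k < 4) :
    pomMeasure M (pvec k b a) = pomMeasure M (pvec ((4 - k) % 4) a b) := by
  interval_cases k
  · rw [pvec_swap0]
  · rw [pvec_swap1, pomMeasure_unit_smul M Complex.I (by simp [Complex.conj_I, Complex.I_mul_I])]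
  · rw [pvec_swap2, pomMeasure_unit_smul M (-1) (by simp)]
  · rw [pvec_swap3, pomMeasure_unit_smul M (-Complex.I)
      (by simp [Complex.conj_I, Complex.I_mul_I])]


lemma densA_isHermitian (M : POM Ω n) (ω : Ω) : (densA M ω).IsHermitian := by
  refine Matrix.IsHermitian.ext fun a b => ?_
  have e0 := pomMeasure_pvec_swap M a b 0 (by norm_num)
  have e1 := pomMeasure_pvec_swap M a b 1 (by norm_num)
  have e2 := pomMeasure_pvec_swap M a b 2 (by norm_num)
  have e3 := pomMeasure_pvec_swap M a b 3 (by norm_num)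
  norm_num at e0 e1 e2 e3
  unfold densA
  simp only [Matrix.of_apply, Finset.sum_range_succ, Finset.sum_range_zero, zero_add,
    pow_zero, pow_one, one_mul, map_mul, map_add, map_pow, map_neg, Complex.conj_I,
    Complex.conj_ofReal, map_inv₀, map_ofNat, e0, e1, e2, e3]
  simp only [RCLike.star_def, map_mul, map_add, map_inv₀, map_ofNat, Complex.conj_ofReal,
    map_pow, map_neg, Complex.conj_I]
  have h2 : Complex.I ^ 2 = -1 := Complex.I_sq
  have h3 : Complex.I ^ 3 = -Complex.I := by rw [pow_succ, h2]; ring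
  have h2' : (-Complex.I) ^ 2 = -1 := by rw [neg_pow]; simp [h2]
  have h3' : (-Complex.I) ^ 3 = Complex.I := by rw [neg_pow, h3]; ring
  simp only [neg_neg, h2', h3']
  ring_nf
  rw [h2, h3]
  ring

lemma qf_densA_integrable (M : POM Ω n) (x : n → ℂ) :
    Integrable (fun ω => qf (densA M ω) x) (trMeas M) := by
  simp only [qf_expand]
  refine integrable_finset_sum _ fun a _ => integrable_finset_sum _ fun b _ => ?_
  exact ((densA_integrable M a b).const_mul _).mul_const _

lemma qf_densA_setIntegral (M : POM Ω n) (x : n → ℂ) {s : Set Ω} (hs : MeasurableSet s) :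
    ∫ ω in s, qf (densA M ω) x ∂(trMeas M) = qf (M.val s) x := by
  simp only [qf_expand]
  rw [integral_finset_sum _ fun a _ => (integrable_finset_sum _ fun b _ =>
    ((densA_integrable M a b).const_mul _).mul_const _).restrict]
  refine Finset.sum_congr rfl fun a _ => ?_
  rw [integral_finset_sum _ fun b _ =>
    (((densA_integrable M a b).const_mul _).mul_const _).restrict]
  refine Finset.sum_congr rfl fun b _ => ?_
  rw [MeasureTheory.integral_mul_const, MeasureTheory.integral_const_mul,
    densA_setIntegral M hs a b]

lemma densA_ae_qf_nonneg (M : POM Ω n) (x : n → ℂ) :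
    ∀ᵐ ω ∂(trMeas M), 0 ≤ qf (densA M ω) x := by
  have hint := qf_densA_integrable M x
  have hre : 0 ≤ᵐ[trMeas M] fun ω => (qf (densA M ω) x).re := by
    refine ae_nonneg_of_forall_setIntegral_nonneg hint.re fun s hs _ => ?_
    have : ∫ ω in s, (qf (densA M ω) x).re ∂(trMeas M)
        = (∫ ω in s, qf (densA M ω) x ∂(trMeas M)).re := by
      exact (RCLike.re_eq_complex_re ▸ integral_re hint.restrict : _)
    rw [this, qf_densA_setIntegral M x hs]
    exact qf_re_nonneg (M.pos s hs) x
  have him1 : 0 ≤ᵐ[trMeas M] fun ω => (qf (densA M ω) x).im := by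
    refine ae_nonneg_of_forall_setIntegral_nonneg hint.im fun s hs _ => ?_
    have : ∫ ω in s, (qf (densA M ω) x).im ∂(trMeas M)
        = (∫ ω in s, qf (densA M ω) x ∂(trMeas M)).im := by
      exact (RCLike.im_eq_complex_im ▸ integral_im hint.restrict : _)
    rw [this, qf_densA_setIntegral M x hs, qf_im_zero (M.pos s hs)]
  have him2 : 0 ≤ᵐ[trMeas M] fun ω => -(qf (densA M ω) x).im := by
    refine ae_nonneg_of_forall_setIntegral_nonneg hint.im.neg fun s hs _ => ?_
    rw [MeasureTheory.integral_neg]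
    have : ∫ ω in s, (qf (densA M ω) x).im ∂(trMeas M)
        = (∫ ω in s, qf (densA M ω) x ∂(trMeas M)).im := by
      exact (RCLike.im_eq_complex_im ▸ integral_im hint.restrict : _)
    rw [this, qf_densA_setIntegral M x hs, qf_im_zero (M.pos s hs)]
    simp
  filter_upwards [hre, him1, him2] with ω h1 h2 h3
  rw [Complex.le_def]
  exact ⟨by simpa using h1, le_antisymm (by simpa using h3) h2 |>.symm ▸ rfl⟩

lemma densA_ae_posSemidef (M : POM Ω n) :
    ∀ᵐ ω ∂(trMeas M), (densA M ω).PosSemidef := by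
  obtain ⟨D, hDc, hDd⟩ := TopologicalSpace.exists_countable_dense (n → ℂ)
  have h : ∀ᵐ ω ∂(trMeas M), ∀ x ∈ D, 0 ≤ qf (densA M ω) x :=
    (ae_ball_iff hDc).2 fun x _ => densA_ae_qf_nonneg M x
  filter_upwards [h] with ω hω
  refine Matrix.PosSemidef.of_dotProduct_mulVec_nonneg (densA_isHermitian M ω) fun x => ?_
  have hcont : Continuous fun y : n → ℂ => qf (densA M ω) y := by
    simp only [qf_expand]
    exact continuous_finset_sum _ fun a _ => continuous_finset_sum _ fun b _ =>
      ((Complex.continuous_conj.comp (continuous_apply a)).mul continuous_const).mul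
        (continuous_apply b)
  have hSclosed : IsClosed {y : n → ℂ | 0 ≤ qf (densA M ω) y} := by
    have : {y : n → ℂ | 0 ≤ qf (densA M ω) y}
        = (fun y => qf (densA M ω) y) ⁻¹' (Complex.re ⁻¹' Set.Ici 0 ∩ Complex.im ⁻¹' {0}) := by
      ext y
      simp [Complex.le_def, eq_comm]
    rw [this]
    exact ((isClosed_Ici.preimage Complex.continuous_re).inter
      (isClosed_singleton.preimage Complex.continuous_im)).preimage hcont
  have hsub : closure D ⊆ {y : n → ℂ | 0 ≤ qf (densA M ω) y} :=
    closure_minimal (fun y hy => hω y hy) hSclosed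
  exact hsub (by rw [hDd.closure_eq]; trivial) 

lemma densA_entry_measurable (M : POM Ω n) (a b : n) :
    Measurable fun ω => densA M ω a b := by
  unfold densA
  simp only [Matrix.of_apply]
  refine Measurable.const_mul ?_ _
  refine Finset.measurable_sum _ fun k _ => ?_
  exact (Complex.measurable_ofReal.comp
    (Measure.measurable_rnDeriv _ _).ennreal_toReal).const_mul _

lemma psd_trace_nonneg {A : Matrix n n ℂ} (hA : A.PosSemidef) : 0 ≤ A.trace := by
  rw [Matrix.trace]
  refine Finset.sum_nonneg fun i _ => ?_
  have := hA.dotProduct_mulVec_nonneg (Pi.single i 1)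
  rwa [show dotProduct (star (Pi.single i (1:ℂ))) (A.mulVec (Pi.single i 1))
    = qf A (Pi.single i 1) from rfl, qf_single] at this

lemma trace_mul_psd_nonneg {A B : Matrix n n ℂ} (hA : A.PosSemidef) (hB : B.PosSemidef) :
    0 ≤ (A * B).trace := by
  obtain ⟨P, rfl⟩ := psd_exists_ct_mul_self hA
  rw [Matrix.mul_assoc, Matrix.trace_mul_comm]
  exact psd_trace_nonneg (hB.mul_mul_conjTranspose_same P)

/-- The complex "trace density" of a POM against a state. -/
noncomputable def gTr (M : POM Ω n) (ρ : Matrix n n ℂ) (ω : Ω) : ℂ := (ρ * densA M ω).trace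

lemma gTr_eq (M : POM Ω n) (ρ : Matrix n n ℂ) (ω : Ω) :
    gTr M ρ ω = ∑ a, ∑ b, ρ a b * densA M ω b a := by
  simp [gTr, Matrix.trace, Matrix.diag, Matrix.mul_apply]

lemma gTr_integrable (M : POM Ω n) (ρ : Matrix n n ℂ) :
    Integrable (gTr M ρ) (trMeas M) := by
  have : gTr M ρ = fun ω => ∑ a, ∑ b, ρ a b * densA M ω b a := funext (gTr_eq M ρ)
  rw [this]
  exact integrable_finset_sum _ fun a _ => integrable_finset_sum _ fun b _ =>
    (densA_integrable M b a).const_mul _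

lemma gTr_re_measurable (M : POM Ω n) (ρ : Matrix n n ℂ) :
    Measurable fun ω => ENNReal.ofReal ((gTr M ρ ω).re) := by
  refine Measurable.ennreal_ofReal (Complex.measurable_re.comp ?_)
  have : gTr M ρ = fun ω => ∑ a, ∑ b, ρ a b * densA M ω b a := funext (gTr_eq M ρ)
  rw [this]
  exact Finset.measurable_sum _ fun a _ => Finset.measurable_sum _ fun b _ =>
    (densA_entry_measurable M b a).const_mul _

lemma gTr_setIntegral (M : POM Ω n) (ρ : Matrix n n ℂ) {s : Set Ω} (hs : MeasurableSet s) :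
    ∫ ω in s, gTr M ρ ω ∂(trMeas M) = (ρ * M.val s).trace := by
  have : ∫ ω in s, gTr M ρ ω ∂(trMeas M)
      = ∫ ω in s, ∑ a, ∑ b, ρ a b * densA M ω b a ∂(trMeas M) :=
    integral_congr_ae (Filter.Eventually.of_forall fun ω => gTr_eq M ρ ω)
  rw [this, integral_finset_sum (μ := (trMeas M).restrict s) Finset.univ
    (f := fun (a : n) (ω : Ω) => ∑ b, ρ a b * densA M ω b a)
    (fun a _ => (integrable_finset_sum _ fun b _ =>
      (densA_integrable M b a).const_mul _).restrict)]
  have hinner : ∀ a : n, ∫ ω in s, ∑ b, ρ a b * densA M ω b a ∂(trMeas M)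
      = ∑ b, ρ a b * M.val s b a := by
    intro a
    rw [integral_finset_sum (μ := (trMeas M).restrict s) Finset.univ
      (f := fun (b : n) (ω : Ω) => ρ a b * densA M ω b a)
      (fun b _ => ((densA_integrable M b a).const_mul _).restrict)]
    exact Finset.sum_congr rfl fun b _ => by
      rw [MeasureTheory.integral_const_mul, densA_setIntegral M hs]
  simp only [hinner]
  simp [Matrix.trace, Matrix.diag, Matrix.mul_apply]

lemma gTr_ae_nonneg (M : POM Ω n) {ρ : Matrix n n ℂ} (hρ : ρ.PosSemidef) :
    ∀ᵐ ω ∂(trMeas M), 0 ≤ gTr M ρ ω := by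
  filter_upwards [densA_ae_posSemidef M] with ω hω
  exact trace_mul_psd_nonneg hρ hω

lemma measure_eq_withDensity (M : POM Ω n) {ρ : Matrix n n ℂ} (hρ : ρ.PosSemidef)
    (μ : Measure Ω) (hμ : ∀ B : Set Ω, MeasurableSet B →
      μ B = ENNReal.ofReal ((ρ * M.val B).trace.re)) :
    μ = (trMeas M).withDensity (fun ω => ENNReal.ofReal ((gTr M ρ ω).re)) := by
  refine Measure.ext fun s hs => ?_
  rw [hμ s hs, withDensity_apply _ hs, ← gTr_setIntegral M ρ hs]
  rw [show (∫ ω in s, gTr M ρ ω ∂(trMeas M)).re = ∫ ω in s, (gTr M ρ ω).re ∂(trMeas M) from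
    ((RCLike.re_eq_complex_re ▸ integral_re (gTr_integrable M ρ).restrict : _)).symm]
  refine MeasureTheory.ofReal_integral_eq_lintegral_ofReal
    ((gTr_integrable M ρ).restrict.re) ?_
  filter_upwards [ae_restrict_of_ae (gTr_ae_nonneg M hρ)] with ω hω
  rw [Complex.le_def] at hω
  simpa using hω.1

section Product

variable {Ω₁ Ω₂ : Type*} [MeasurableSpace Ω₁] [MeasurableSpace Ω₂]
  {n₁ n₂ : Type*} [Fintype n₁] [DecidableEq n₁] [Fintype n₂] [DecidableEq n₂]

open Kronecker

lemma kron_conjTranspose (P : Matrix n₁ n₁ ℂ) (Q : Matrix n₂ n₂ ℂ) :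
    (P ⊗ₖ Q)ᴴ = Pᴴ ⊗ₖ Qᴴ := by
  ext p q
  simp [Matrix.conjTranspose_apply, Matrix.kroneckerMap_apply, _root_.star_mul', mul_comm]

lemma posSemidef_kron {A : Matrix n₁ n₁ ℂ} {B : Matrix n₂ n₂ ℂ}
    (hA : A.PosSemidef) (hB : B.PosSemidef) : (A ⊗ₖ B).PosSemidef := by
  obtain ⟨P, rfl⟩ := psd_exists_ct_mul_self hA
  obtain ⟨Q, rfl⟩ := psd_exists_ct_mul_self hB
  rw [show (Pᴴ * P) ⊗ₖ (Qᴴ * Q) = (Pᴴ ⊗ₖ Qᴴ) * (P ⊗ₖ Q) from Matrix.mul_kronecker_mul _ _ _ _,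
    ← kron_conjTranspose]
  exact Matrix.posSemidef_conjTranspose_mul_self (P ⊗ₖ Q)

variable (M₁ : POM Ω₁ n₁) (M₂ : POM Ω₂ n₂)

/-- The candidate product POM values. -/
noncomputable def prodVal (B : Set (Ω₁ × Ω₂)) : Matrix (n₁ × n₂) (n₁ × n₂) ℂ :=
  Matrix.of fun p q => ∫ ω in B, densA M₁ ω.1 p.1 q.1 * densA M₂ ω.2 p.2 q.2
    ∂((trMeas M₁).prod (trMeas M₂))

lemma prodVal_integrable (p q : n₁ × n₂) :
    Integrable (fun ω : Ω₁ × Ω₂ => densA M₁ ω.1 p.1 q.1 * densA M₂ ω.2 p.2 q.2)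
      ((trMeas M₁).prod (trMeas M₂)) :=
  (densA_integrable M₁ p.1 q.1).mul_prod (densA_integrable M₂ p.2 q.2)

lemma prodVal_rect {B₁ : Set Ω₁} {B₂ : Set Ω₂} (h₁ : MeasurableSet B₁) (h₂ : MeasurableSet B₂) :
    prodVal M₁ M₂ (B₁ ×ˢ B₂) = M₁.val B₁ ⊗ₖ M₂.val B₂ := by
  ext p q
  show (∫ ω in B₁ ×ˢ B₂, densA M₁ ω.1 p.1 q.1 * densA M₂ ω.2 p.2 q.2
    ∂((trMeas M₁).prod (trMeas M₂))) = _
  calc ∫ ω in B₁ ×ˢ B₂, densA M₁ ω.1 p.1 q.1 * densA M₂ ω.2 p.2 q.2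
        ∂((trMeas M₁).prod (trMeas M₂))
      = ∫ ω, (fun x => densA M₁ x p.1 q.1) ω.1 * (fun y => densA M₂ y p.2 q.2) ω.2
        ∂(((trMeas M₁).restrict B₁).prod ((trMeas M₂).restrict B₂)) := by
        rw [Measure.prod_restrict]
    _ = (∫ x in B₁, densA M₁ x p.1 q.1 ∂(trMeas M₁))
        * (∫ y in B₂, densA M₂ y p.2 q.2 ∂(trMeas M₂)) :=
        MeasureTheory.integral_prod_mul (f := fun x => densA M₁ x p.1 q.1)
          (g := fun y => densA M₂ y p.2 q.2)
    _ = M₁.val B₁ p.1 q.1 * M₂.val B₂ p.2 q.2 := by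
        rw [densA_setIntegral M₁ h₁, densA_setIntegral M₂ h₂]
    _ = (M₁.val B₁ ⊗ₖ M₂.val B₂) p q := (Matrix.kroneckerMap_apply _ _ _ _ _).symm

lemma prodVal_empty : prodVal M₁ M₂ ∅ = 0 := by
  ext p q
  show (∫ ω in (∅ : Set (Ω₁ × Ω₂)), _ ∂((trMeas M₁).prod (trMeas M₂))) = _
  rw [Measure.restrict_empty, integral_zero_measure]
  rfl

lemma prodVal_univ : prodVal M₁ M₂ Set.univ = 1 := by
  rw [← Set.univ_prod_univ, prodVal_rect M₁ M₂ MeasurableSet.univ MeasurableSet.univ,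
    M₁.univ, M₂.univ]
  exact Matrix.one_kronecker_one

lemma prodVal_hasSum (f : ℕ → Set (Ω₁ × Ω₂)) (hf : ∀ i, MeasurableSet (f i))
    (hd : Pairwise (Function.onFun Disjoint f)) :
    HasSum (fun i => prodVal M₁ M₂ (f i)) (prodVal M₁ M₂ (⋃ i, f i)) := by
  refine Pi.hasSum.mpr fun p => Pi.hasSum.mpr fun q => ?_
  exact hasSum_integral_iUnion hf hd ((prodVal_integrable M₁ M₂ p q).integrableOn)

lemma ae_prod_fst {P : Ω₁ → Prop} (h : ∀ᵐ x ∂(trMeas M₁), P x) :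
    ∀ᵐ z ∂((trMeas M₁).prod (trMeas M₂)), P z.1 := by
  rw [MeasureTheory.ae_iff] at h ⊢
  refine measure_mono_null (t := {x | ¬ P x} ×ˢ (Set.univ : Set Ω₂))
    (fun z hz => Set.mem_prod.mpr ⟨hz, Set.mem_univ z.2⟩) ?_
  rw [Measure.prod_prod, h, zero_mul]

lemma ae_prod_snd {P : Ω₂ → Prop} (h : ∀ᵐ x ∂(trMeas M₂), P x) :
    ∀ᵐ z ∂((trMeas M₁).prod (trMeas M₂)), P z.2 := by
  rw [MeasureTheory.ae_iff] at h ⊢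
  refine measure_mono_null (t := (Set.univ : Set Ω₁) ×ˢ {x | ¬ P x})
    (fun z hz => Set.mem_prod.mpr ⟨Set.mem_univ z.1, hz⟩) ?_
  rw [Measure.prod_prod, h, mul_zero]

lemma qf_prodVal (B : Set (Ω₁ × Ω₂)) (z : n₁ × n₂ → ℂ) :
    qf (prodVal M₁ M₂ B) z
      = ∫ ω in B, qf ((densA M₁ ω.1) ⊗ₖ (densA M₂ ω.2)) z ∂((trMeas M₁).prod (trMeas M₂)) := by
  have h1 := integral_finset_sum (μ := ((trMeas M₁).prod (trMeas M₂)).restrict B) Finset.univ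
    (f := fun (p : n₁ × n₂) (ω : Ω₁ × Ω₂) => ∑ q : n₁ × n₂, (starRingEnd ℂ) (z p)
      * (densA M₁ ω.1 p.1 q.1 * densA M₂ ω.2 p.2 q.2) * z q)
    (fun p _ => integrable_finset_sum _ fun q _ =>
      (((prodVal_integrable M₁ M₂ p q).const_mul _).mul_const _).restrict)
  have h2 : ∀ p : n₁ × n₂,
      ∫ ω in B, ∑ q : n₁ × n₂, (starRingEnd ℂ) (z p)
        * (densA M₁ ω.1 p.1 q.1 * densA M₂ ω.2 p.2 q.2) * z q
        ∂((trMeas M₁).prod (trMeas M₂))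
      = ∑ q : n₁ × n₂, (starRingEnd ℂ) (z p)
        * (∫ ω in B, densA M₁ ω.1 p.1 q.1 * densA M₂ ω.2 p.2 q.2
            ∂((trMeas M₁).prod (trMeas M₂))) * z q := by
    intro p
    rw [integral_finset_sum (μ := ((trMeas M₁).prod (trMeas M₂)).restrict B) Finset.univ
      (f := fun (q : n₁ × n₂) (ω : Ω₁ × Ω₂) => (starRingEnd ℂ) (z p)
        * (densA M₁ ω.1 p.1 q.1 * densA M₂ ω.2 p.2 q.2) * z q)
      (fun q _ => (((prodVal_integrable M₁ M₂ p q).const_mul _).mul_const _).restrict)]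
    exact Finset.sum_congr rfl fun q _ => by
      rw [MeasureTheory.integral_mul_const, MeasureTheory.integral_const_mul]
  calc qf (prodVal M₁ M₂ B) z
      = ∑ p : n₁ × n₂, ∑ q : n₁ × n₂, (starRingEnd ℂ) (z p)
        * (∫ ω in B, densA M₁ ω.1 p.1 q.1 * densA M₂ ω.2 p.2 q.2
            ∂((trMeas M₁).prod (trMeas M₂))) * z q := by
        rw [qf_expand]; rfl
    _ = ∑ p : n₁ × n₂, ∫ ω in B, ∑ q : n₁ × n₂, (starRingEnd ℂ) (z p)
        * (densA M₁ ω.1 p.1 q.1 * densA M₂ ω.2 p.2 q.2) * z q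
        ∂((trMeas M₁).prod (trMeas M₂)) :=
        (Finset.sum_congr rfl fun p _ => (h2 p).symm)
    _ = ∫ ω in B, qf ((densA M₁ ω.1) ⊗ₖ (densA M₂ ω.2)) z
        ∂((trMeas M₁).prod (trMeas M₂)) := by
        rw [← h1]
        refine integral_congr_ae (Filter.Eventually.of_forall fun ω => ?_)
        simp only [qf_expand, Matrix.kroneckerMap_apply]

lemma integral_nonneg_complex {α : Type*} [MeasurableSpace α] {μ : Measure α} {f : α → ℂ}
    (hf : Integrable f μ) (h : ∀ᵐ x ∂μ, 0 ≤ f x) : 0 ≤ ∫ x, f x ∂μ := by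
  rw [Complex.le_def]
  constructor
  · rw [show (∫ x, f x ∂μ).re = ∫ x, (f x).re ∂μ from
      ((RCLike.re_eq_complex_re ▸ integral_re hf : _)).symm]
    simp only [Complex.zero_re]
    refine integral_nonneg_of_ae ?_
    filter_upwards [h] with x hx
    rw [Complex.le_def] at hx
    simpa using hx.1
  · rw [show (∫ x, f x ∂μ).im = ∫ x, (f x).im ∂μ from
      ((RCLike.im_eq_complex_im ▸ integral_im hf : _)).symm]
    have him : (fun x => (f x).im) =ᵐ[μ] fun _ => 0 := by
      filter_upwards [h] with x hx
      rw [Complex.le_def] at hx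
      simpa using hx.2.symm
    rw [integral_congr_ae him, integral_zero]
    simp

lemma prodVal_posSemidef {B : Set (Ω₁ × Ω₂)} (hB : MeasurableSet B) :
    (prodVal M₁ M₂ B).PosSemidef := by
  refine Matrix.PosSemidef.of_dotProduct_mulVec_nonneg ?_ ?_
  · refine Matrix.IsHermitian.ext fun p q => ?_
    show star (prodVal M₁ M₂ B q p) = prodVal M₁ M₂ B p q
    show (starRingEnd ℂ) (∫ ω in B, densA M₁ ω.1 q.1 p.1 * densA M₂ ω.2 q.2 p.2
      ∂((trMeas M₁).prod (trMeas M₂))) = _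
    rw [← integral_conj]
    refine integral_congr_ae (Filter.Eventually.of_forall fun ω => ?_)
    simp only [map_mul]
    rw [show (starRingEnd ℂ) (densA M₁ ω.1 q.1 p.1) = densA M₁ ω.1 p.1 q.1 from
        (densA_isHermitian M₁ ω.1).apply p.1 q.1,
      show (starRingEnd ℂ) (densA M₂ ω.2 q.2 p.2) = densA M₂ ω.2 p.2 q.2 from
        (densA_isHermitian M₂ ω.2).apply p.2 q.2]
  · intro z
    show 0 ≤ qf (prodVal M₁ M₂ B) z
    rw [qf_prodVal]
    refine integral_nonneg_complex ?_ ?_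
    · have : Integrable (fun ω : Ω₁ × Ω₂ => qf ((densA M₁ ω.1) ⊗ₖ (densA M₂ ω.2)) z)
          ((trMeas M₁).prod (trMeas M₂)) := by
        simp only [qf_expand, Matrix.kroneckerMap_apply]
        exact integrable_finset_sum _ fun p _ => integrable_finset_sum _ fun q _ =>
          ((prodVal_integrable M₁ M₂ p q).const_mul _).mul_const _
      exact this.restrict
    · have h1 := ae_prod_fst M₁ M₂ (densA_ae_posSemidef M₁)
      have h2 := ae_prod_snd M₁ M₂ (densA_ae_posSemidef M₂)
      refine ae_restrict_of_ae ?_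
      filter_upwards [h1, h2] with ω hω1 hω2
      exact (posSemidef_kron hω1 hω2).dotProduct_mulVec_nonneg z

end Product

end POMaux

open POMaux

/-- the assignment `B₁ × B₂ ↦ M₁(B₁) ⊗ M₂(B₂)` extends to a POM on
`Ω₁ × Ω₂` acting on `H₁ ⊗ H₂`, and for density operators `ρ₁, ρ₂` the induced
probability measure `tr((ρ₁ ⊗ ρ₂)(M₁ ⊗ M₂)(·))` is the product of the measures
`tr(ρ₁ M₁(·))` and `tr(ρ₂ M₂(·))`. -/
theorem pom_tensor_product
    {Ω₁ Ω₂ : Type*} [MeasurableSpace Ω₁] [MeasurableSpace Ω₂] {d₁ d₂ : ℕ}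
    (M₁ : POM Ω₁ (Fin d₁)) (M₂ : POM Ω₂ (Fin d₂))
    (ρ₁ : Matrix (Fin d₁) (Fin d₁) ℂ) (ρ₂ : Matrix (Fin d₂) (Fin d₂) ℂ)
    (hρ₁_pos : ρ₁.PosSemidef) (hρ₁_tr : ρ₁.trace = 1)
    (hρ₂_pos : ρ₂.PosSemidef) (hρ₂_tr : ρ₂.trace = 1)
    (μ₁ : Measure Ω₁) (μ₂ : Measure Ω₂)
    [IsProbabilityMeasure μ₁] [IsProbabilityMeasure μ₂]
    (hμ₁ : ∀ B : Set Ω₁, MeasurableSet B →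
      μ₁ B = ENNReal.ofReal ((ρ₁ * M₁.val B).trace.re))
    (hμ₂ : ∀ B : Set Ω₂, MeasurableSet B →
      μ₂ B = ENNReal.ofReal ((ρ₂ * M₂.val B).trace.re)) :
    ∃ M : POM (Ω₁ × Ω₂) (Fin d₁ × Fin d₂),
      (∀ (B₁ : Set Ω₁) (B₂ : Set Ω₂), MeasurableSet B₁ → MeasurableSet B₂ →
        M.val (B₁ ×ˢ B₂) = M₁.val B₁ ⊗ₖ M₂.val B₂) ∧
      (∀ B : Set (Ω₁ × Ω₂), MeasurableSet B →
        ENNReal.ofReal (((ρ₁ ⊗ₖ ρ₂) * M.val B).trace.re) = (μ₁.prod μ₂) B) := by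
  classical
  refine ⟨⟨prodVal M₁ M₂, fun B hB => prodVal_posSemidef M₁ M₂ hB,
    prodVal_empty M₁ M₂, prodVal_univ M₁ M₂, prodVal_hasSum M₁ M₂⟩,
    fun B₁ B₂ h₁ h₂ => prodVal_rect M₁ M₂ h₁ h₂, ?_⟩
  intro B hB
  show ENNReal.ofReal (((ρ₁ ⊗ₖ ρ₂) * prodVal M₁ M₂ B).trace.re) = (μ₁.prod μ₂) B
  have hμ₁d := measure_eq_withDensity M₁ hρ₁_pos μ₁ hμ₁
  have hμ₂d := measure_eq_withDensity M₂ hρ₂_pos μ₂ hμ₂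
  have hprod : μ₁.prod μ₂ = ((trMeas M₁).prod (trMeas M₂)).withDensity
      (fun z => ENNReal.ofReal ((gTr M₁ ρ₁ z.1).re) * ENNReal.ofReal ((gTr M₂ ρ₂ z.2).re)) := by
    refine Measure.prod_eq fun s t hs ht => ?_
    rw [withDensity_apply _ (hs.prod ht), ← Measure.prod_restrict,
      lintegral_prod_mul ((gTr_re_measurable M₁ ρ₁).aemeasurable)
        ((gTr_re_measurable M₂ ρ₂).aemeasurable),
      ← withDensity_apply _ hs, ← withDensity_apply _ ht, ← hμ₁d, ← hμ₂d]
  have hpt : ∀ ω : Ω₁ × Ω₂, gTr M₁ ρ₁ ω.1 * gTr M₂ ρ₂ ω.2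
      = ∑ p : Fin d₁ × Fin d₂, ∑ q : Fin d₁ × Fin d₂,
        (ρ₁ ⊗ₖ ρ₂) p q * (densA M₁ ω.1 q.1 p.1 * densA M₂ ω.2 q.2 p.2) := by
    intro ω
    show (ρ₁ * densA M₁ ω.1).trace * (ρ₂ * densA M₂ ω.2).trace = _
    rw [← Matrix.trace_kronecker, Matrix.mul_kronecker_mul]
    simp [Matrix.trace, Matrix.diag, Matrix.mul_apply, Matrix.kroneckerMap_apply]
  have htr : ((ρ₁ ⊗ₖ ρ₂) * prodVal M₁ M₂ B).trace
      = ∫ ω in B, gTr M₁ ρ₁ ω.1 * gTr M₂ ρ₂ ω.2 ∂((trMeas M₁).prod (trMeas M₂)) := by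
    have h0 : ∫ ω in B, gTr M₁ ρ₁ ω.1 * gTr M₂ ρ₂ ω.2 ∂((trMeas M₁).prod (trMeas M₂))
        = ∫ ω in B, ∑ p : Fin d₁ × Fin d₂, ∑ q : Fin d₁ × Fin d₂,
          (ρ₁ ⊗ₖ ρ₂) p q * (densA M₁ ω.1 q.1 p.1 * densA M₂ ω.2 q.2 p.2)
          ∂((trMeas M₁).prod (trMeas M₂)) :=
      integral_congr_ae (Filter.Eventually.of_forall fun ω => hpt ω)
    rw [h0, integral_finset_sum (μ := ((trMeas M₁).prod (trMeas M₂)).restrict B) Finset.univ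
      (f := fun (p : Fin d₁ × Fin d₂) (ω : Ω₁ × Ω₂) => ∑ q : Fin d₁ × Fin d₂,
        (ρ₁ ⊗ₖ ρ₂) p q * (densA M₁ ω.1 q.1 p.1 * densA M₂ ω.2 q.2 p.2))
      (fun p _ => (integrable_finset_sum _ fun q _ =>
        (prodVal_integrable M₁ M₂ q p).const_mul _).restrict)]
    have hinner : ∀ p : Fin d₁ × Fin d₂,
        ∫ ω in B, ∑ q : Fin d₁ × Fin d₂,
          (ρ₁ ⊗ₖ ρ₂) p q * (densA M₁ ω.1 q.1 p.1 * densA M₂ ω.2 q.2 p.2)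
          ∂((trMeas M₁).prod (trMeas M₂))
        = ∑ q : Fin d₁ × Fin d₂, (ρ₁ ⊗ₖ ρ₂) p q * prodVal M₁ M₂ B q p := by
      intro p
      rw [integral_finset_sum (μ := ((trMeas M₁).prod (trMeas M₂)).restrict B) Finset.univ
        (f := fun (q : Fin d₁ × Fin d₂) (ω : Ω₁ × Ω₂) =>
          (ρ₁ ⊗ₖ ρ₂) p q * (densA M₁ ω.1 q.1 p.1 * densA M₂ ω.2 q.2 p.2))
        (fun q _ => ((prodVal_integrable M₁ M₂ q p).const_mul _).restrict)]
      exact Finset.sum_congr rfl fun q _ => by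
        rw [MeasureTheory.integral_const_mul]; rfl
    simp only [hinner]
    simp [Matrix.trace, Matrix.diag, Matrix.mul_apply]
  have hae : ∀ᵐ z ∂((trMeas M₁).prod (trMeas M₂)), 0 ≤ gTr M₁ ρ₁ z.1 ∧ 0 ≤ gTr M₂ ρ₂ z.2 := by
    filter_upwards [ae_prod_fst M₁ M₂ (gTr_ae_nonneg M₁ hρ₁_pos),
      ae_prod_snd M₁ M₂ (gTr_ae_nonneg M₂ hρ₂_pos)] with z hz1 hz2
    exact ⟨hz1, hz2⟩
  have hint : Integrable (fun z : Ω₁ × Ω₂ => gTr M₁ ρ₁ z.1 * gTr M₂ ρ₂ z.2)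
      ((trMeas M₁).prod (trMeas M₂)) :=
    (gTr_integrable M₁ ρ₁).mul_prod (gTr_integrable M₂ ρ₂)
  rw [htr]
  rw [show (∫ ω in B, gTr M₁ ρ₁ ω.1 * gTr M₂ ρ₂ ω.2 ∂((trMeas M₁).prod (trMeas M₂))).re
      = ∫ ω in B, (gTr M₁ ρ₁ ω.1 * gTr M₂ ρ₂ ω.2).re ∂((trMeas M₁).prod (trMeas M₂)) from
    ((RCLike.re_eq_complex_re ▸ integral_re hint.restrict : _)).symm]
  have hof : ENNReal.ofReal (∫ ω in B, (gTr M₁ ρ₁ ω.1 * gTr M₂ ρ₂ ω.2).re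
        ∂((trMeas M₁).prod (trMeas M₂)))
      = ∫⁻ ω in B, ENNReal.ofReal ((gTr M₁ ρ₁ ω.1 * gTr M₂ ρ₂ ω.2).re)
        ∂((trMeas M₁).prod (trMeas M₂)) := by
    refine MeasureTheory.ofReal_integral_eq_lintegral_ofReal
      (f := fun ω : Ω₁ × Ω₂ => (gTr M₁ ρ₁ ω.1 * gTr M₂ ρ₂ ω.2).re)
      (by exact hint.restrict.re) ?_
    filter_upwards [ae_restrict_of_ae hae] with z hz
    obtain ⟨hz1, hz2⟩ := hz
    rw [Complex.le_def] at hz1 hz2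
    have i1 : (gTr M₁ ρ₁ z.1).im = 0 := by simpa using hz1.2.symm
    have i2 : (gTr M₂ ρ₂ z.2).im = 0 := by simpa using hz2.2.symm
    have e : (gTr M₁ ρ₁ z.1 * gTr M₂ ρ₂ z.2).re
        = (gTr M₁ ρ₁ z.1).re * (gTr M₂ ρ₂ z.2).re := by
      rw [Complex.mul_re, i1, i2]; ring
    rw [e]
    exact mul_nonneg (by simpa using hz1.1) (by simpa using hz2.1)
  rw [hof]
  have hcongr : ∫⁻ z in B, ENNReal.ofReal ((gTr M₁ ρ₁ z.1 * gTr M₂ ρ₂ z.2).re)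
        ∂((trMeas M₁).prod (trMeas M₂))
      = ∫⁻ z in B, ENNReal.ofReal ((gTr M₁ ρ₁ z.1).re) * ENNReal.ofReal ((gTr M₂ ρ₂ z.2).re)
        ∂((trMeas M₁).prod (trMeas M₂)) := by
    refine lintegral_congr_ae ?_
    filter_upwards [ae_restrict_of_ae hae] with z hz
    obtain ⟨hz1, hz2⟩ := hz
    rw [Complex.le_def] at hz1 hz2
    have i1 : (gTr M₁ ρ₁ z.1).im = 0 := by simpa using hz1.2.symm
    have i2 : (gTr M₂ ρ₂ z.2).im = 0 := by simpa using hz2.2.symm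
    have e : (gTr M₁ ρ₁ z.1 * gTr M₂ ρ₂ z.2).re
        = (gTr M₁ ρ₁ z.1).re * (gTr M₂ ρ₂ z.2).re := by
      rw [Complex.mul_re, i1, i2]; ring
    rw [e, ENNReal.ofReal_mul (by simpa using hz1.1)]
  rw [hcongr, hprod, withDensity_apply _ hB]
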